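/- Let (X,d) be a separable metric space and let λ be a locally finite Borel regular measure over X. Assume there exist constants C > 0 and N > 0 such that for every bounded set A ⊂ X and every family 𝓑 of closed balls such that each point of A is the center of some ball of 𝓑, there is a countable subfamily 𝓕 ⊂ 𝓑 with λ(A) ≤ C·λ(⋃_{B∈𝓕} B) and Σ_{B∈𝓕} χ_B ≤ N. Let ν be a locally finite Borel regular measure over X mutually singular with λ. Then lim_{r→0} ν(B(x,r))/λ(B(x,r)) = 0 for λ-almost every x ∈ X. -/

import Mathlib

open MeasureTheory Metric Filter Set
open scoped ENNReal NNReal Topology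

/-- Key covering estimate: if every point of a bounded set `F ⊆ U` admits arbitrarily small
closed balls on which `ε·lam < ν`, then `lam F ≤ C · ε⁻¹ · N · ν U`. -/
private lemma stmt14_key {X : Type*} [MetricSpace X]
    [MeasurableSpace X] [BorelSpace X]
    (lam ν : Measure X) (C : ℝ≥0) (N : ℕ)
    (hyp : ∀ (A : Set X) (ℬ : Set (X × ℝ)),
      Bornology.IsBounded A →
      (∀ p ∈ ℬ, 0 < p.2) →
      (∀ x ∈ A, ∃ r : ℝ, 0 < r ∧ (x, r) ∈ ℬ) →
      ∃ F ⊆ ℬ, F.Countable ∧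
        lam A ≤ (C : ℝ≥0∞) * lam (⋃ p ∈ F, closedBall p.1 p.2) ∧
        ∀ y : X, {p ∈ F | y ∈ closedBall p.1 p.2}.encard ≤ (N : ℕ∞))
    (ε : ℝ≥0∞) (hε0 : ε ≠ 0) (hεt : ε ≠ ∞)
    (F : Set X) (hFb : Bornology.IsBounded F)
    (U : Set X) (hU : IsOpen U) (hFU : F ⊆ U)
    (hF : ∀ x ∈ F, ∀ ρ : ℝ, 0 < ρ → ∃ r, 0 < r ∧ r ≤ ρ ∧
        ε * lam (closedBall x r) < ν (closedBall x r)) :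
    lam F ≤ (C : ℝ≥0∞) * (ε⁻¹ * ((N : ℝ≥0∞) * ν U)) := by
  set ℬ : Set (X × ℝ) := {p | p.1 ∈ F ∧ 0 < p.2 ∧ closedBall p.1 p.2 ⊆ U ∧
      ε * lam (closedBall p.1 p.2) < ν (closedBall p.1 p.2)} with hℬdef
  have hball : ∀ p ∈ ℬ, 0 < p.2 := fun p hp => hp.2.1
  have hcenter : ∀ x ∈ F, ∃ r : ℝ, 0 < r ∧ (x, r) ∈ ℬ := by
    intro x hx
    obtain ⟨ρ, hρ, hρU⟩ := Metric.isOpen_iff.1 hU x (hFU hx)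
    obtain ⟨r, hr0, hrρ, hlt⟩ := hF x hx (ρ / 2) (by linarith)
    exact ⟨r, hr0, hx, hr0,
      (closedBall_subset_ball (by linarith)).trans hρU, hlt⟩
  obtain ⟨𝓕, h𝓕ℬ, h𝓕c, hle, hov⟩ := hyp F ℬ hFb hball hcenter
  haveI : Countable 𝓕 := h𝓕c.to_subtype
  -- sum of measures of balls bounded by N * ν U
  have hsum : ∑' p : 𝓕, ν (closedBall (p : X × ℝ).1 (p : X × ℝ).2)
      ≤ (N : ℝ≥0∞) * ν U := by
    have h1 : ∀ p : 𝓕, ν (closedBall (p : X × ℝ).1 (p : X × ℝ).2)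
        = ∫⁻ y, (closedBall (p : X × ℝ).1 (p : X × ℝ).2).indicator 1 y ∂ν := by
      intro p
      rw [lintegral_indicator_one measurableSet_closedBall]
    calc ∑' p : 𝓕, ν (closedBall (p : X × ℝ).1 (p : X × ℝ).2)
        = ∑' p : 𝓕, ∫⁻ y, (closedBall (p : X × ℝ).1 (p : X × ℝ).2).indicator 1 y ∂ν := by
          exact tsum_congr h1
      _ = ∫⁻ y, ∑' p : 𝓕, (closedBall (p : X × ℝ).1 (p : X × ℝ).2).indicator 1 y ∂ν := by
          exact (lintegral_tsum fun p =>
            ((measurable_one.indicator measurableSet_closedBall).aemeasurable)).symm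
      _ ≤ ∫⁻ y, U.indicator (fun _ => (N : ℝ≥0∞)) y ∂ν := by
          refine lintegral_mono fun y => ?_
          by_cases hy : y ∈ U
          · rw [Set.indicator_of_mem hy]
            -- the sum counts the balls containing y
            have heq : ∑' p : 𝓕, (closedBall (p : X × ℝ).1 (p : X × ℝ).2).indicator
                (1 : X → ℝ≥0∞) y
                = ∑' p : ↥{q : ↥𝓕 | y ∈ closedBall (q : X × ℝ).1 (q : X × ℝ).2},
                    (1 : ℝ≥0∞) := by
              rw [show (∑' p : ↥{q : ↥𝓕 | y ∈ closedBall (q : X × ℝ).1 (q : X × ℝ).2},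
                    (1 : ℝ≥0∞))
                  = ∑' p : ↥𝓕, Set.indicator
                      {q : ↥𝓕 | y ∈ closedBall (q : X × ℝ).1 (q : X × ℝ).2}
                      (fun _ => (1 : ℝ≥0∞)) p from
                tsum_subtype {q : ↥𝓕 | y ∈ closedBall (q : X × ℝ).1 (q : X × ℝ).2}
                  (fun _ => (1 : ℝ≥0∞))]
              refine tsum_congr fun p => ?_
              by_cases hp : y ∈ closedBall (p : X × ℝ).1 (p : X × ℝ).2
              · rw [Set.indicator_of_mem hp,
                  Set.indicator_of_mem (show p ∈ {q : ↥𝓕 |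
                    y ∈ closedBall (q : X × ℝ).1 (q : X × ℝ).2} from hp)]
                rfl
              · rw [Set.indicator_of_notMem hp,
                  Set.indicator_of_notMem (show p ∉ {q : ↥𝓕 |
                    y ∈ closedBall (q : X × ℝ).1 (q : X × ℝ).2} from hp)]
            rw [heq, ENNReal.tsum_set_one]
            have hcard : {q : 𝓕 | y ∈ closedBall (q : X × ℝ).1 (q : X × ℝ).2}.encard
                ≤ (N : ℕ∞) := by
              have himg : (Subtype.val '' {q : 𝓕 | y ∈ closedBall (q : X × ℝ).1 (q : X × ℝ).2})
                  = {p ∈ 𝓕 | y ∈ closedBall p.1 p.2} := by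
                ext p
                constructor
                · rintro ⟨q, hq, rfl⟩; exact ⟨q.2, hq⟩
                · rintro ⟨hp𝓕, hpy⟩; exact ⟨⟨p, hp𝓕⟩, hpy, rfl⟩
              have := hov y
              rw [← himg, Subtype.val_injective.encard_image] at this
              exact this
            calc ({q : 𝓕 | y ∈ closedBall (q : X × ℝ).1 (q : X × ℝ).2}.encard : ℝ≥0∞)
                ≤ ((N : ℕ∞) : ℝ≥0∞) := by exact_mod_cast ENat.toENNReal_le.mpr hcard
              _ = (N : ℝ≥0∞) := by simp
          · rw [Set.indicator_of_notMem hy]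
            have : ∀ p : 𝓕, (closedBall (p : X × ℝ).1 (p : X × ℝ).2).indicator
                (1 : X → ℝ≥0∞) y = 0 := by
              intro p
              refine Set.indicator_of_notMem (fun hyp' => hy ?_) _
              exact (h𝓕ℬ p.2).2.2.1 hyp'
            simp [this]
      _ = (N : ℝ≥0∞) * ν U := lintegral_indicator_const hU.measurableSet _
  -- each ball satisfies lam B ≤ ε⁻¹ * ν B
  have hball_le : ∀ p : 𝓕, lam (closedBall (p : X × ℝ).1 (p : X × ℝ).2)
      ≤ ε⁻¹ * ν (closedBall (p : X × ℝ).1 (p : X × ℝ).2) := by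
    intro p
    have h := (h𝓕ℬ p.2).2.2.2.le
    calc lam (closedBall (p : X × ℝ).1 (p : X × ℝ).2)
        = ε⁻¹ * (ε * lam (closedBall (p : X × ℝ).1 (p : X × ℝ).2)) := by
          rw [← mul_assoc, ENNReal.inv_mul_cancel hε0 hεt, one_mul]
      _ ≤ ε⁻¹ * ν (closedBall (p : X × ℝ).1 (p : X × ℝ).2) := mul_le_mul_right h _
  calc lam F ≤ (C : ℝ≥0∞) * lam (⋃ p ∈ 𝓕, closedBall p.1 p.2) := hle
    _ ≤ (C : ℝ≥0∞) * ∑' p : 𝓕, lam (closedBall (p : X × ℝ).1 (p : X × ℝ).2) :=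
        mul_le_mul_right (measure_biUnion_le lam h𝓕c _) _
    _ ≤ (C : ℝ≥0∞) * ∑' p : 𝓕, ε⁻¹ * ν (closedBall (p : X × ℝ).1 (p : X × ℝ).2) :=
        mul_le_mul_right (ENNReal.tsum_le_tsum hball_le) _
    _ = (C : ℝ≥0∞) * (ε⁻¹ * ∑' p : 𝓕, ν (closedBall (p : X × ℝ).1 (p : X × ℝ).2)) := by
        rw [ENNReal.tsum_mul_left]
    _ ≤ (C : ℝ≥0∞) * (ε⁻¹ * ((N : ℝ≥0∞) * ν U)) :=
        mul_le_mul_right (mul_le_mul_right hsum _) _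

theorem stmt14 {X : Type*} [MetricSpace X] [TopologicalSpace.SeparableSpace X]
    [MeasurableSpace X] [BorelSpace X]
    (lam : Measure X) [IsLocallyFiniteMeasure lam]
    (C : ℝ≥0) (hC : 0 < C) (N : ℕ) (hN : 0 < N)
    (hyp : ∀ (A : Set X) (ℬ : Set (X × ℝ)),
      Bornology.IsBounded A →
      (∀ p ∈ ℬ, 0 < p.2) →
      (∀ x ∈ A, ∃ r : ℝ, 0 < r ∧ (x, r) ∈ ℬ) →
      ∃ F ⊆ ℬ, F.Countable ∧
        lam A ≤ (C : ℝ≥0∞) * lam (⋃ p ∈ F, closedBall p.1 p.2) ∧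
        ∀ y : X, {p ∈ F | y ∈ closedBall p.1 p.2}.encard ≤ (N : ℕ∞))
    (ν : Measure X) [IsLocallyFiniteMeasure ν]
    (hsing : ∃ A : Set X, ν A = 0 ∧ lam Aᶜ = 0) :
    ∀ᵐ x ∂lam, Filter.Tendsto
      (fun r : ℝ => ν (closedBall x r) / lam (closedBall x r))
      (𝓝[>] (0:ℝ)) (𝓝 0) := by
  rcases isEmpty_or_nonempty X with hX | hX
  · exact ae_of_all _ fun x => (IsEmpty.false x).elim
  obtain ⟨x₀⟩ := hX
  haveI : SecondCountableTopology X := UniformSpace.secondCountable_of_separable X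
  obtain ⟨A, hνA, hlamA⟩ := hsing
  -- bad sets
  set ε : ℕ → ℝ≥0∞ := fun n => ((n : ℝ≥0∞) + 1)⁻¹ with hεdef
  have hε0 : ∀ n, ε n ≠ 0 := fun n =>
    ENNReal.inv_ne_zero.2 (ENNReal.add_ne_top.2 ⟨ENNReal.natCast_ne_top n, ENNReal.one_ne_top⟩)
  have hεt : ∀ n, ε n ≠ ∞ := fun n =>
    ENNReal.inv_ne_top.2 (by simp)
  set S : ℕ → ℕ → Set X := fun n m =>
    {x | x ∈ A ∧ x ∈ closedBall x₀ m ∧ ∀ ρ : ℝ, 0 < ρ → ∃ r, 0 < r ∧ r ≤ ρ ∧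
      ε n * lam (closedBall x r) < ν (closedBall x r)} with hSdef
  have hSnull : ∀ n m, lam (S n m) = 0 := by
    intro n m
    have hbound : ∀ δ : ℝ≥0∞, 0 < δ →
        lam (S n m) ≤ (C : ℝ≥0∞) * ((ε n)⁻¹ * ((N : ℝ≥0∞) * δ)) := by
      intro δ hδ
      obtain ⟨U, hAU, hUopen, hUν⟩ :=
        Set.exists_isOpen_lt_of_lt A δ (by rw [hνA]; exact hδ)
      have h1 : lam (S n m) ≤ (C : ℝ≥0∞) * ((ε n)⁻¹ * ((N : ℝ≥0∞) * ν U)) := by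
        refine stmt14_key lam ν C N hyp (ε n) (hε0 n) (hεt n) (S n m)
          ((isBounded_closedBall).subset fun x hx => hx.2.1) U hUopen
          (fun x hx => hAU hx.1) (fun x hx => hx.2.2)
      exact h1.trans (mul_le_mul_right (mul_le_mul_right
        (mul_le_mul_right hUν.le _) _) _)
    -- conclude lam (S n m) = 0
    have hK : ∀ η : ℝ≥0∞, 0 < η → lam (S n m) ≤ η := by
      intro η hη
      set K : ℝ≥0∞ := (C : ℝ≥0∞) * ((ε n)⁻¹ * (N : ℝ≥0∞)) with hKdef
      have hKne : K ≠ ∞ := by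
        simp [hKdef, ENNReal.mul_ne_top, ENNReal.coe_ne_top, ENNReal.natCast_ne_top,
          ENNReal.inv_ne_top.2 (hε0 n)]
      rcases eq_or_ne K 0 with hK0 | hK0
      · calc lam (S n m) ≤ (C : ℝ≥0∞) * ((ε n)⁻¹ * ((N : ℝ≥0∞) * 1)) :=
            hbound 1 zero_lt_one
          _ = K := by rw [hKdef]; ring
          _ = 0 := hK0
          _ ≤ η := zero_le
      · have hδpos : 0 < η / K := ENNReal.div_pos hη.ne' hKne
        calc lam (S n m) ≤ (C : ℝ≥0∞) * ((ε n)⁻¹ * ((N : ℝ≥0∞) * (η / K))) :=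
            hbound _ hδpos
          _ = K * (η / K) := by rw [hKdef]; ring
          _ ≤ η := ENNReal.mul_div_le
    refine le_antisymm ?_ zero_le
    refine ENNReal.le_of_forall_pos_le_add fun η hη _ => ?_
    rw [zero_add]
    exact hK η (ENNReal.coe_pos.2 hη)
  -- main conclusion
  have hE : lam (Aᶜ ∪ ⋃ n, ⋃ m, S n m) = 0 := by
    refine measure_union_null hlamA ?_
    exact measure_iUnion_null fun n => measure_iUnion_null fun m => hSnull n m
  rw [ae_iff]
  refine measure_mono_null ?_ hE
  intro x hx
  simp only [mem_setOf_eq] at hx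
  by_contra hxE
  apply hx
  have hxA : x ∈ A := by
    by_contra hxA
    exact hxE (Set.mem_union_left _ hxA)
  have hxS : ∀ n m, x ∉ S n m := by
    intro n m hmem
    exact hxE (Set.mem_union_right _ (Set.mem_iUnion.2 ⟨n, Set.mem_iUnion.2 ⟨m, hmem⟩⟩))
  obtain ⟨m, hm⟩ := exists_nat_ge (dist x x₀)
  have hxcb : x ∈ closedBall x₀ m := mem_closedBall.2 hm
  have hkey : ∀ n, ∃ ρ : ℝ, 0 < ρ ∧ ∀ r : ℝ, 0 < r → r ≤ ρ →
      ν (closedBall x r) ≤ ε n * lam (closedBall x r) := by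
    intro n
    have h := hxS n m
    simp only [hSdef, mem_setOf_eq] at h
    push_neg at h
    exact h hxA hxcb
  refine ENNReal.tendsto_nhds_zero.2 fun η hη => ?_
  obtain ⟨n, hn⟩ := ENNReal.exists_inv_nat_lt hη.ne'
  have hεle : ε n ≤ η := by
    refine le_trans ?_ hn.le
    exact ENNReal.inv_le_inv' (by simp)
  obtain ⟨ρ, hρpos, hρ⟩ := hkey n
  filter_upwards [Ioo_mem_nhdsGT hρpos] with r hr
  have h := hρ r hr.1 hr.2.le
  calc ν (closedBall x r) / lam (closedBall x r)
      = ν (closedBall x r) * (lam (closedBall x r))⁻¹ := div_eq_mul_inv _ _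
    _ ≤ (ε n * lam (closedBall x r)) * (lam (closedBall x r))⁻¹ := mul_le_mul_left h _
    _ = ε n * (lam (closedBall x r) * (lam (closedBall x r))⁻¹) := mul_assoc _ _ _
    _ ≤ ε n * 1 := mul_le_mul_right (ENNReal.mul_inv_le_one _) _
    _ = ε n := mul_one _
    _ ≤ η := hεle
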